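/- There is an absolute constant C > 0 with the following property: for every σ > 0, every continuously differentiable function f : [0, σ] → ℂ, every b > 0 and every real number ε, one has sup_{0 < t ≤ σ} |f(t)| ≤ C [ ( b ∫₀^σ t^ε |f′(t)|² dt )^{1/2} + ( b^{−1} ∫₀^σ |f(t)|² t^{−ε} dt )^{1/2} + |f(0)| ]. -/

import Mathlib

open MeasureTheory

lemma my_sqrt_add_le (x y : ℝ) (hx : 0 ≤ x) (hy : 0 ≤ y) :
    Real.sqrt (x + y) ≤ Real.sqrt x + Real.sqrt y := by
  have h1 := Real.sq_sqrt hx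
  have h2 := Real.sq_sqrt hy
  have h3 := Real.sqrt_nonneg x
  have h4 := Real.sqrt_nonneg y
  have : x + y ≤ (Real.sqrt x + Real.sqrt y) ^ 2 := by nlinarith
  calc Real.sqrt (x + y) ≤ Real.sqrt ((Real.sqrt x + Real.sqrt y) ^ 2) :=
        Real.sqrt_le_sqrt this
    _ = Real.sqrt x + Real.sqrt y := Real.sqrt_sq (by positivity)

lemma my_norm_sq (z : ℂ) : ‖z‖ ^ 2 = z.re ^ 2 + z.im ^ 2 := by
  rw [Complex.sq_norm, Complex.normSq_apply]; ring

set_option maxHeartbeats 1000000 in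
theorem stmt7 :
    ∃ C : ℝ, 0 < C ∧
      ∀ (σ : ℝ) (f : ℝ → ℂ) (b ε : ℝ), 0 < σ → 0 < b →
        ContDiffOn ℝ 1 f (Set.Icc 0 σ) →
        ∀ t : ℝ, 0 < t → t ≤ σ →
          ENNReal.ofReal ‖f t‖ ≤ ENNReal.ofReal C *
            ((ENNReal.ofReal b *
                ∫⁻ s in Set.Ioc (0:ℝ) σ, ENNReal.ofReal (s ^ ε * ‖deriv f s‖ ^ 2)) ^ (1/2 : ℝ) +
             (ENNReal.ofReal b⁻¹ *
                ∫⁻ s in Set.Ioc (0:ℝ) σ, ENNReal.ofReal (‖f s‖ ^ 2 / s ^ ε)) ^ (1/2 : ℝ) +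
             ENNReal.ofReal ‖f 0‖) := by
  refine ⟨1, one_pos, ?_⟩
  intro σ f b ε hσ hb hf t ht htσ
  rw [show ENNReal.ofReal (1:ℝ) = 1 by simp, one_mul]
  set A := ∫⁻ s in Set.Ioc (0:ℝ) σ, ENNReal.ofReal (s ^ ε * ‖deriv f s‖ ^ 2) with hAdef
  set B := ∫⁻ s in Set.Ioc (0:ℝ) σ, ENNReal.ofReal (‖f s‖ ^ 2 / s ^ ε) with hBdef
  have hb0 : ENNReal.ofReal b ≠ 0 := by
    simp only [ne_eq, ENNReal.ofReal_eq_zero, not_le]; exact hb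
  have hb0' : ENNReal.ofReal b⁻¹ ≠ 0 := by
    simp only [ne_eq, ENNReal.ofReal_eq_zero, not_le]; positivity
  by_cases hA : A = ⊤
  · have : (ENNReal.ofReal b * A) ^ (1/2 : ℝ) = ⊤ := by
      rw [hA, ENNReal.mul_top hb0, ENNReal.top_rpow_of_pos (by norm_num)]
    rw [this]; simp
  by_cases hB : B = ⊤
  · have : (ENNReal.ofReal b⁻¹ * B) ^ (1/2 : ℝ) = ⊤ := by
      rw [hB, ENNReal.mul_top hb0', ENNReal.top_rpow_of_pos (by norm_num)]
    rw [this]; simp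
  -- main case
  set φ : ℝ → ℝ := fun u => (f u).re ^ 2 + (f u).im ^ 2 with hφdef
  set D : ℝ → ℝ := fun u => 2 * (f u).re * (deriv f u).re + 2 * (f u).im * (deriv f u).im
    with hDdef
  set M₁ : ℝ → ℝ := fun u => b * (u ^ ε * ‖deriv f u‖ ^ 2) with hM1def
  set M₂ : ℝ → ℝ := fun u => b⁻¹ * (‖f u‖ ^ 2 / u ^ ε) with hM2def
  have hfc : ContinuousOn f (Set.Icc 0 σ) := hf.continuousOn
  have hIoct : Set.Ioc (0:ℝ) t ⊆ Set.Ioc 0 σ := Set.Ioc_subset_Ioc_right htσ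
  have hIocIcc : Set.Ioc (0:ℝ) t ⊆ Set.Icc 0 σ :=
    Set.Ioc_subset_Icc_self.trans (Set.Icc_subset_Icc_right htσ)
  have hmeasIoc : MeasurableSet (Set.Ioc (0:ℝ) t) := measurableSet_Ioc
  -- derivative of φ at interior points
  have hderiv : ∀ u ∈ Set.Ioo (0:ℝ) σ, HasDerivAt φ (D u) u := by
    intro u hu
    have hmem : Set.Icc (0:ℝ) σ ∈ nhds u := Icc_mem_nhds hu.1 hu.2
    have hdf : DifferentiableAt ℝ f u :=
      ((hf.differentiableOn one_ne_zero) u (mem_of_mem_nhds hmem)).differentiableAt hmem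
    have h1 : HasDerivAt f (deriv f u) u := hdf.hasDerivAt
    have hre : HasDerivAt (fun v => (f v).re) ((deriv f u).re) u :=
      (Complex.reCLM.hasFDerivAt.comp_hasDerivAt u h1)
    have him : HasDerivAt (fun v => (f v).im) ((deriv f u).im) u :=
      (Complex.imCLM.hasFDerivAt.comp_hasDerivAt u h1)
    have := (hre.pow 2).add (him.pow 2)
    convert this using 1
    · rfl
    · rfl
    · rfl
    simp only [hDdef, Nat.cast_ofNat, pow_one]
    ring
  -- bound |D|
  have hDle : ∀ u, |D u| ≤ 2 * ‖f u‖ * ‖deriv f u‖ := by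
    intro u
    have h1 : D u = 2 * ((starRingEnd ℂ) (f u) * deriv f u).re := by
      simp [hDdef, Complex.mul_re]; ring
    have h2 : |((starRingEnd ℂ) (f u) * deriv f u).re| ≤ ‖f u‖ * ‖deriv f u‖ := by
      calc |((starRingEnd ℂ) (f u) * deriv f u).re|
          ≤ ‖(starRingEnd ℂ) (f u) * deriv f u‖ := Complex.abs_re_le_norm _
        _ = ‖f u‖ * ‖deriv f u‖ := by
            rw [norm_mul, Complex.norm_conj]
        _ = ‖f u‖ * ‖deriv f u‖ := rfl
    calc |D u| = 2 * |((starRingEnd ℂ) (f u) * deriv f u).re| := by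
          rw [h1, abs_mul]; norm_num
      _ ≤ 2 * (‖f u‖ * ‖deriv f u‖) := by linarith
      _ = 2 * ‖f u‖ * ‖deriv f u‖ := by ring
  -- AM-GM bound
  have hDM : ∀ u ∈ Set.Ioc (0:ℝ) σ, D u ≤ M₁ u + M₂ u := by
    intro u hu
    have hu0 : (0:ℝ) < u := hu.1
    have hue : (0:ℝ) < u ^ ε := Real.rpow_pos_of_pos hu0 ε
    have hc : (0:ℝ) < b * u ^ ε := mul_pos hb hue
    have hcc : (b * u ^ ε) * (b * u ^ ε)⁻¹ = 1 := mul_inv_cancel₀ (ne_of_gt hc)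
    have hx := norm_nonneg (deriv f u)
    have hy := norm_nonneg (f u)
    have key : 2 * ‖f u‖ * ‖deriv f u‖ ≤
        (b * u ^ ε) * ‖deriv f u‖ ^ 2 + (b * u ^ ε)⁻¹ * ‖f u‖ ^ 2 := by
      nlinarith [sq_nonneg ((b * u ^ ε) * ‖deriv f u‖ - ‖f u‖), hc, hcc,
        inv_nonneg.mpr hc.le, mul_pos (inv_pos.mpr hc) hc]
    have hrw : (b * u ^ ε) * ‖deriv f u‖ ^ 2 + (b * u ^ ε)⁻¹ * ‖f u‖ ^ 2 = M₁ u + M₂ u := by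
      simp only [hM1def, hM2def, mul_inv, div_eq_mul_inv]; ring
    calc D u ≤ |D u| := le_abs_self _
      _ ≤ 2 * ‖f u‖ * ‖deriv f u‖ := hDle u
      _ ≤ (b * u ^ ε) * ‖deriv f u‖ ^ 2 + (b * u ^ ε)⁻¹ * ‖f u‖ ^ 2 := key
      _ = M₁ u + M₂ u := hrw
  -- measurability
  have hfm : AEStronglyMeasurable f (volume.restrict (Set.Ioc (0:ℝ) t)) :=
    (hfc.mono hIocIcc).aestronglyMeasurable hmeasIoc
  have hrpow : Measurable (fun u : ℝ => u ^ ε) := by measurability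
  have hM1meas : AEStronglyMeasurable M₁ (volume.restrict (Set.Ioc (0:ℝ) t)) := by
    apply Measurable.aestronglyMeasurable
    exact measurable_const.mul (hrpow.mul
      (((measurable_deriv f).norm).pow measurable_const))
  have hM2meas : AEStronglyMeasurable M₂ (volume.restrict (Set.Ioc (0:ℝ) t)) := by
    apply AEStronglyMeasurable.const_mul
    have h1 : AEMeasurable (fun u => ‖f u‖) (volume.restrict (Set.Ioc (0:ℝ) t)) :=
      hfm.norm.aemeasurable
    exact ((h1.pow_const 2).div hrpow.aemeasurable).aestronglyMeasurable
  -- lintegral bounds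
  have hM1lint : ∫⁻ u in Set.Ioc (0:ℝ) t, ENNReal.ofReal (M₁ u) ≤ ENNReal.ofReal b * A := by
    calc ∫⁻ u in Set.Ioc (0:ℝ) t, ENNReal.ofReal (M₁ u)
        = ∫⁻ u in Set.Ioc (0:ℝ) t,
            ENNReal.ofReal b * ENNReal.ofReal (u ^ ε * ‖deriv f u‖ ^ 2) := by
          apply lintegral_congr
          intro u
          rw [hM1def, ← ENNReal.ofReal_mul hb.le]
      _ = ENNReal.ofReal b * ∫⁻ u in Set.Ioc (0:ℝ) t,
            ENNReal.ofReal (u ^ ε * ‖deriv f u‖ ^ 2) :=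
          lintegral_const_mul' _ _ ENNReal.ofReal_ne_top
      _ ≤ ENNReal.ofReal b * A := by
          rw [hAdef]; exact mul_le_mul_right (lintegral_mono_set hIoct) _
  have hM2lint : ∫⁻ u in Set.Ioc (0:ℝ) t, ENNReal.ofReal (M₂ u) ≤ ENNReal.ofReal b⁻¹ * B := by
    calc ∫⁻ u in Set.Ioc (0:ℝ) t, ENNReal.ofReal (M₂ u)
        = ∫⁻ u in Set.Ioc (0:ℝ) t,
            ENNReal.ofReal b⁻¹ * ENNReal.ofReal (‖f u‖ ^ 2 / u ^ ε) := by
          apply lintegral_congr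
          intro u
          rw [hM2def, ← ENNReal.ofReal_mul (by positivity)]
      _ = ENNReal.ofReal b⁻¹ * ∫⁻ u in Set.Ioc (0:ℝ) t,
            ENNReal.ofReal (‖f u‖ ^ 2 / u ^ ε) :=
          lintegral_const_mul' _ _ ENNReal.ofReal_ne_top
      _ ≤ ENNReal.ofReal b⁻¹ * B := by
          rw [hBdef]; exact mul_le_mul_right (lintegral_mono_set hIoct) _
  have hbAfin : ENNReal.ofReal b * A ≠ ⊤ := ENNReal.mul_ne_top ENNReal.ofReal_ne_top hA
  have hbBfin : ENNReal.ofReal b⁻¹ * B ≠ ⊤ := ENNReal.mul_ne_top ENNReal.ofReal_ne_top hB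
  -- nonnegativity a.e.
  have hM1nn : 0 ≤ᶠ[ae (volume.restrict (Set.Ioc (0:ℝ) t))] M₁ := by
    filter_upwards [ae_restrict_mem hmeasIoc] with u hu
    have : (0:ℝ) < u ^ ε := Real.rpow_pos_of_pos hu.1 ε
    simp only [hM1def]; positivity
  have hM2nn : 0 ≤ᶠ[ae (volume.restrict (Set.Ioc (0:ℝ) t))] M₂ := by
    filter_upwards [ae_restrict_mem hmeasIoc] with u hu
    have : (0:ℝ) < u ^ ε := Real.rpow_pos_of_pos hu.1 ε
    simp only [hM2def]; positivity
  -- integrability of M₁, M₂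
  have hM1int : IntegrableOn M₁ (Set.Ioc (0:ℝ) t) := by
    refine ⟨hM1meas, ?_⟩
    rw [hasFiniteIntegral_iff_norm]
    calc ∫⁻ u in Set.Ioc (0:ℝ) t, ENNReal.ofReal ‖M₁ u‖
        = ∫⁻ u in Set.Ioc (0:ℝ) t, ENNReal.ofReal (M₁ u) := by
          apply lintegral_congr_ae
          filter_upwards [hM1nn] with u hu
          rw [Real.norm_of_nonneg hu]
      _ ≤ ENNReal.ofReal b * A := hM1lint
      _ < ⊤ := lt_top_iff_ne_top.mpr hbAfin
  have hM2int : IntegrableOn M₂ (Set.Ioc (0:ℝ) t) := by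
    refine ⟨hM2meas, ?_⟩
    rw [hasFiniteIntegral_iff_norm]
    calc ∫⁻ u in Set.Ioc (0:ℝ) t, ENNReal.ofReal ‖M₂ u‖
        = ∫⁻ u in Set.Ioc (0:ℝ) t, ENNReal.ofReal (M₂ u) := by
          apply lintegral_congr_ae
          filter_upwards [hM2nn] with u hu
          rw [Real.norm_of_nonneg hu]
      _ ≤ ENNReal.ofReal b⁻¹ * B := hM2lint
      _ < ⊤ := lt_top_iff_ne_top.mpr hbBfin
  -- integrability of D
  have hDmeas : AEStronglyMeasurable D (volume.restrict (Set.Ioc (0:ℝ) t)) := by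
    have h1 : AEStronglyMeasurable (fun u => (f u).re) (volume.restrict (Set.Ioc (0:ℝ) t)) :=
      Complex.continuous_re.comp_aestronglyMeasurable hfm
    have h2 : AEStronglyMeasurable (fun u => (f u).im) (volume.restrict (Set.Ioc (0:ℝ) t)) :=
      Complex.continuous_im.comp_aestronglyMeasurable hfm
    have h3 : AEStronglyMeasurable (fun u => (deriv f u).re)
        (volume.restrict (Set.Ioc (0:ℝ) t)) :=
      (Complex.measurable_re.comp (measurable_deriv f)).aestronglyMeasurable
    have h4 : AEStronglyMeasurable (fun u => (deriv f u).im)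
        (volume.restrict (Set.Ioc (0:ℝ) t)) :=
      (Complex.measurable_im.comp (measurable_deriv f)).aestronglyMeasurable
    exact ((h1.const_mul 2).mul h3).add ((h2.const_mul 2).mul h4)
  have hDint : IntegrableOn D (Set.Ioc (0:ℝ) t) := by
    apply Integrable.mono' (hM1int.add hM2int) hDmeas
    filter_upwards [ae_restrict_mem hmeasIoc] with u hu
    calc ‖D u‖ = |D u| := rfl
      _ ≤ 2 * ‖f u‖ * ‖deriv f u‖ := hDle u
      _ ≤ M₁ u + M₂ u := by
          have hu0 : (0:ℝ) < u := hu.1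
          have hue : (0:ℝ) < u ^ ε := Real.rpow_pos_of_pos hu0 ε
          have hc : (0:ℝ) < b * u ^ ε := mul_pos hb hue
          have hcc : (b * u ^ ε) * (b * u ^ ε)⁻¹ = 1 := mul_inv_cancel₀ (ne_of_gt hc)
          have key : 2 * ‖f u‖ * ‖deriv f u‖ ≤
              (b * u ^ ε) * ‖deriv f u‖ ^ 2 + (b * u ^ ε)⁻¹ * ‖f u‖ ^ 2 := by
            nlinarith [sq_nonneg ((b * u ^ ε) * ‖deriv f u‖ - ‖f u‖), hc, hcc,
              inv_nonneg.mpr hc.le, mul_pos (inv_pos.mpr hc) hc]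
          have hrw : (b * u ^ ε) * ‖deriv f u‖ ^ 2 + (b * u ^ ε)⁻¹ * ‖f u‖ ^ 2
              = M₁ u + M₂ u := by
            simp only [hM1def, hM2def, mul_inv, div_eq_mul_inv]; ring
          linarith [key, hrw.le]
  -- FTC
  have hφcont : ContinuousOn φ (Set.Icc 0 t) := by
    have h0 : ContinuousOn f (Set.Icc 0 t) :=
      hfc.mono (Set.Icc_subset_Icc_right htσ)
    exact ((Complex.continuous_re.comp_continuousOn h0).pow 2).add
      ((Complex.continuous_im.comp_continuousOn h0).pow 2)
  have hFTC : ∫ u in (0:ℝ)..t, D u = φ t - φ 0 := by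
    apply intervalIntegral.integral_eq_sub_of_hasDerivAt_of_le ht.le hφcont
    · intro x hx
      exact hderiv x ⟨hx.1, lt_of_lt_of_le hx.2 htσ⟩
    · rw [intervalIntegrable_iff_integrableOn_Ioc_of_le ht.le]
      exact hDint
  have hstep : φ t - φ 0 ≤ (∫ u in Set.Ioc (0:ℝ) t, M₁ u) + ∫ u in Set.Ioc (0:ℝ) t, M₂ u := by
    rw [← hFTC, intervalIntegral.integral_of_le ht.le]
    rw [← integral_add hM1int hM2int]
    exact setIntegral_mono_on hDint (hM1int.add hM2int) hmeasIoc
      (fun u hu => hDM u (hIoct hu))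
  -- real integral bounds
  have hM1val : ∫ u in Set.Ioc (0:ℝ) t, M₁ u ≤ (ENNReal.ofReal b * A).toReal := by
    rw [integral_eq_lintegral_of_nonneg_ae hM1nn hM1meas]
    exact ENNReal.toReal_mono hbAfin hM1lint
  have hM2val : ∫ u in Set.Ioc (0:ℝ) t, M₂ u ≤ (ENNReal.ofReal b⁻¹ * B).toReal := by
    rw [integral_eq_lintegral_of_nonneg_ae hM2nn hM2meas]
    exact ENNReal.toReal_mono hbBfin hM2lint
  set a1 := (ENNReal.ofReal b * A).toReal with ha1
  set a2 := (ENNReal.ofReal b⁻¹ * B).toReal with ha2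
  have ha1nn : 0 ≤ a1 := ENNReal.toReal_nonneg
  have ha2nn : 0 ≤ a2 := ENNReal.toReal_nonneg
  have hφval : ∀ u, φ u = ‖f u‖ ^ 2 := fun u => (my_norm_sq (f u)).symm
  have hkey : ‖f t‖ ^ 2 ≤ ‖f 0‖ ^ 2 + a1 + a2 := by
    have := hstep
    rw [hφval t, hφval 0] at this
    linarith [hM1val, hM2val]
  -- take square roots
  have hsq : ‖f t‖ ≤ ‖f 0‖ + Real.sqrt a1 + Real.sqrt a2 := by
    have h1 : ‖f t‖ = Real.sqrt (‖f t‖ ^ 2) := (Real.sqrt_sq (norm_nonneg _)).symm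
    rw [h1]
    calc Real.sqrt (‖f t‖ ^ 2) ≤ Real.sqrt (‖f 0‖ ^ 2 + a1 + a2) := Real.sqrt_le_sqrt hkey
      _ ≤ Real.sqrt (‖f 0‖ ^ 2 + a1) + Real.sqrt a2 :=
          my_sqrt_add_le _ _ (by positivity) ha2nn
      _ ≤ Real.sqrt (‖f 0‖ ^ 2) + Real.sqrt a1 + Real.sqrt a2 := by
          have := my_sqrt_add_le (‖f 0‖ ^ 2) a1 (by positivity) ha1nn
          linarith
      _ = ‖f 0‖ + Real.sqrt a1 + Real.sqrt a2 := by
          rw [Real.sqrt_sq (norm_nonneg _)]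
  -- convert to ENNReal
  have hsqrt1 : ENNReal.ofReal (Real.sqrt a1) = (ENNReal.ofReal b * A) ^ (1/2 : ℝ) := by
    rw [Real.sqrt_eq_rpow, ← ENNReal.ofReal_rpow_of_nonneg ha1nn (by norm_num),
      ha1, ENNReal.ofReal_toReal hbAfin]
  have hsqrt2 : ENNReal.ofReal (Real.sqrt a2) = (ENNReal.ofReal b⁻¹ * B) ^ (1/2 : ℝ) := by
    rw [Real.sqrt_eq_rpow, ← ENNReal.ofReal_rpow_of_nonneg ha2nn (by norm_num),
      ha2, ENNReal.ofReal_toReal hbBfin]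
  calc ENNReal.ofReal ‖f t‖
      ≤ ENNReal.ofReal (Real.sqrt a1 + Real.sqrt a2 + ‖f 0‖) := by
        apply ENNReal.ofReal_le_ofReal; linarith
    _ = ENNReal.ofReal (Real.sqrt a1) + ENNReal.ofReal (Real.sqrt a2)
        + ENNReal.ofReal ‖f 0‖ := by
        rw [ENNReal.ofReal_add (by positivity) (norm_nonneg _),
          ENNReal.ofReal_add (Real.sqrt_nonneg _) (Real.sqrt_nonneg _)]
    _ = _ := by rw [hsqrt1, hsqrt2]
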